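/- For every compact set G ⊆ ℝⁿ of positive Lebesgue measure, the surface regularity satisfies s(G) ≤ 1. -/

import Mathlib

open MeasureTheory Metric Filter Set Pointwise

/-- The surface regularity of a set `G`:
`s(G) = sup { s ≥ 0 : ∃ C > 0, |G_ε| − |G| ≤ C ε^s for all ε ∈ (0,1] }`. -/
noncomputable def surfReg {E : Type*} [PseudoMetricSpace E] [MeasureSpace E] (G : Set E) : ℝ :=
  sSup {s : ℝ | 0 ≤ s ∧ ∃ C : ℝ, 0 < C ∧ ∀ ε : ℝ, 0 < ε → ε ≤ 1 →
    (volume (cthickening ε G)).toReal - (volume G).toReal ≤ C * ε ^ s}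

/-- The L¹-Hölder regularity of a set `G`:
`α(G) = sup { α ≥ 0 : ∃ C > 0, |(G+h) Δ G| ≤ C ‖h‖^α for all h }`. -/
noncomputable def holderReg {E : Type*} [NormedAddCommGroup E] [MeasureSpace E] (G : Set E) : ℝ :=
  sSup {α : ℝ | 0 ≤ α ∧ ∃ C : ℝ, 0 < C ∧ ∀ h : E,
    (volume (symmDiff ((fun x => x + h) '' G) G)).toReal ≤ C * ‖h‖ ^ α}


private lemma vol_image_add {n : ℕ} (a : EuclideanSpace ℝ (Fin n))
    (A : Set (EuclideanSpace ℝ (Fin n))) :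
    volume ((fun x => x + a) '' A) = volume A := by
  rw [Set.image_add_right, measure_preimage_add_right]

private lemma tele {n : ℕ} (G : Set (EuclideanSpace ℝ (Fin n)))
    (h : EuclideanSpace ℝ (Fin n)) :
    ∀ k : ℕ, volume ((fun x => x + (k : ℝ) • h) '' G \ G)
      ≤ k * volume ((fun x => x + h) '' G \ G) := by
  intro k
  induction k with
  | zero => simp
  | succ k ih =>
    have key : (fun x => x + ((k + 1 : ℕ) : ℝ) • h) '' G \ G ⊆
        ((fun x => x + (k : ℝ) • h) '' ((fun x => x + h) '' G \ G)) ∪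
        ((fun x => x + (k : ℝ) • h) '' G \ G) := by
      rintro x ⟨⟨g, hg, rfl⟩, hxG⟩
      have harr : g + ((k + 1 : ℕ) : ℝ) • h = (g + h) + (k : ℝ) • h := by
        push_cast; module
      by_cases hy : g + h ∈ G
      · right
        exact ⟨⟨g + h, hy, harr.symm⟩, hxG⟩
      · left
        exact ⟨g + h, ⟨⟨g, hg, rfl⟩, hy⟩, harr.symm⟩
    calc volume ((fun x => x + ((k + 1 : ℕ) : ℝ) • h) '' G \ G)
        ≤ volume ((fun x => x + (k : ℝ) • h) '' ((fun x => x + h) '' G \ G)) +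
          volume ((fun x => x + (k : ℝ) • h) '' G \ G) :=
          (measure_mono key).trans (measure_union_le _ _)
      _ ≤ volume ((fun x => x + h) '' G \ G) + k * volume ((fun x => x + h) '' G \ G) := by
          rw [vol_image_add]; exact add_le_add le_rfl ih
      _ = (k + 1 : ℕ) * volume ((fun x => x + h) '' G \ G) := by
          push_cast; ring

/-- Key linear lower bound: for compact `G` in a ball of radius `R` and `v` a unit vector,
`|G_ε| - |G| ≥ |G| ε / (2R+2)` for `ε ∈ (0,1]`. -/
private lemma key_lb {n : ℕ} (G : Set (EuclideanSpace ℝ (Fin n)))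
    (hG : IsCompact G) (v : EuclideanSpace ℝ (Fin n)) (hv : ‖v‖ = 1)
    (R : ℝ) (hR0 : 0 ≤ R) (hR : G ⊆ closedBall 0 R)
    {ε : ℝ} (hε : 0 < ε) (hε1 : ε ≤ 1) :
    (volume G).toReal * ε / (2 * R + 2) ≤
      (volume (cthickening ε G)).toReal - (volume G).toReal := by
  set h : EuclideanSpace ℝ (Fin n) := ε • v with hdef
  have hnorm : ‖h‖ = ε := by
    rw [hdef, norm_smul, hv, Real.norm_eq_abs, abs_of_pos hε, mul_one]
  set S1 : Set (EuclideanSpace ℝ (Fin n)) := (fun x => x + h) '' G with hS1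
  have hS1c : IsCompact S1 := hG.image (continuous_add_right h)
  have hS1vol : volume S1 = volume G := vol_image_add h G
  have hGfin : volume G ≠ ⊤ := hG.measure_lt_top.ne
  have hDfin : volume (S1 \ G) ≠ ⊤ :=
    (lt_of_le_of_lt (measure_mono Set.diff_subset) (hS1vol ▸ hG.measure_lt_top)).ne
  set m := (volume G).toReal with hm
  set d := (volume (S1 \ G)).toReal with hd
  -- step 1 : m ≤ N * d for N = ⌈(2R+1)/ε⌉₊
  set N : ℕ := ⌈(2 * R + 1) / ε⌉₊ with hN
  have hNε : 2 * R + 1 ≤ (N : ℝ) * ε := by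
    have := Nat.le_ceil ((2 * R + 1) / ε)
    rw [div_le_iff₀ hε] at this
    exact this
  have hdisj : Disjoint ((fun x => x + (N : ℝ) • h) '' G) G := by
    rw [Set.disjoint_left]
    rintro x ⟨g, hg, rfl⟩ hxG
    have h1 : ‖g + (N : ℝ) • h‖ ≤ R := mem_closedBall_zero_iff.1 (hR hxG)
    have h2 : ‖g‖ ≤ R := mem_closedBall_zero_iff.1 (hR hg)
    have h3 : ‖(N : ℝ) • h‖ = (N : ℝ) * ε := by
      rw [norm_smul, hnorm, Real.norm_eq_abs, abs_of_nonneg (Nat.cast_nonneg N)]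
    have h4 : ‖(N : ℝ) • h‖ ≤ ‖g + (N : ℝ) • h‖ + ‖g‖ := by
      have e : (g + (N : ℝ) • h) - g = (N : ℝ) • h := by abel
      calc ‖(N : ℝ) • h‖ = ‖(g + (N : ℝ) • h) - g‖ := by rw [e]
        _ ≤ _ := norm_sub_le _ _
    rw [h3] at h4
    linarith
  have hSNG : volume ((fun x => x + (N : ℝ) • h) '' G \ G) = volume G := by
    rw [hdisj.sdiff_eq_left, vol_image_add]
  have hkey : volume G ≤ (N : ENNReal) * volume (S1 \ G) := by
    rw [← hSNG]
    exact tele G h N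
  have hmd : m ≤ (N : ℝ) * d := by
    have hfin : ((N : ENNReal) * volume (S1 \ G)) ≠ ⊤ :=
      ENNReal.mul_ne_top (ENNReal.natCast_ne_top N) hDfin
    have := ENNReal.toReal_mono hfin hkey
    rwa [ENNReal.toReal_mul, ENNReal.toReal_natCast] at this
  -- step 2 : N ≤ (2R+2)/ε
  have hNle : (N : ℝ) ≤ (2 * R + 2) / ε := by
    have h1 : (N : ℝ) < (2 * R + 1) / ε + 1 :=
      Nat.ceil_lt_add_one (by positivity)
    have h2 : (1 : ℝ) ≤ 1 / ε := by
      rw [le_div_iff₀ hε]; linarith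
    have : (2 * R + 1) / ε + 1 / ε = (2 * R + 2) / ε := by ring
    linarith
  have hd0 : 0 ≤ d := ENNReal.toReal_nonneg
  have hm0 : 0 ≤ m := ENNReal.toReal_nonneg
  have hstep : m * ε / (2 * R + 2) ≤ d := by
    have h1 : m ≤ (2 * R + 2) / ε * d :=
      hmd.trans (mul_le_mul_of_nonneg_right hNle hd0)
    rw [div_le_iff₀ (by linarith : (0:ℝ) < 2 * R + 2)]
    calc m * ε ≤ ((2 * R + 2) / ε * d) * ε := by nlinarith
      _ = d * (2 * R + 2) := by field_simp
  -- step 3 : |G_ε| ≥ m + d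
  have hsub : G ∪ S1 ⊆ cthickening ε G := by
    apply Set.union_subset (self_subset_cthickening G)
    rintro x ⟨g, hg, rfl⟩
    apply mem_cthickening_of_dist_le _ g ε G hg
    rw [dist_eq_norm]
    simp [hnorm.le]
  have hctfin : volume (cthickening ε G) ≠ ⊤ := by
    have : IsCompact (cthickening ε G) :=
      Metric.isCompact_of_isClosed_isBounded isClosed_cthickening hG.isBounded.cthickening
    exact this.measure_lt_top.ne
  have hvol : volume G + volume (S1 \ G) ≤ volume (cthickening ε G) := by
    rw [← measure_union (disjoint_sdiff_self_right)
      ((hS1c.measurableSet).diff hG.measurableSet)]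
    have heq : G ∪ (S1 \ G) = G ∪ S1 := Set.union_diff_self
    rw [heq]
    exact measure_mono hsub
  have hlow : m + d ≤ (volume (cthickening ε G)).toReal := by
    have := ENNReal.toReal_mono hctfin hvol
    rwa [ENNReal.toReal_add hGfin hDfin] at this
  linarith

theorem surfReg_le_one' {n : ℕ} (G : Set (EuclideanSpace ℝ (Fin n)))
    (hG : IsCompact G) (hpos : 0 < volume G) :
    sSup {s : ℝ | 0 ≤ s ∧ ∃ C : ℝ, 0 < C ∧ ∀ ε : ℝ, 0 < ε → ε ≤ 1 →
      (volume (cthickening ε G)).toReal - (volume G).toReal ≤ C * ε ^ s} ≤ 1 := by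
  rcases Nat.eq_zero_or_pos n with hn | hn
  · -- the zero-dimensional case: the set is unbounded, so its `sSup` is `0`
    subst hn
    haveI : Subsingleton (EuclideanSpace ℝ (Fin 0)) :=
      ⟨fun a b => PiLp.ext fun i => Fin.elim0 i⟩
    have hne : G.Nonempty := nonempty_of_measure_ne_zero hpos.ne'
    have hGuniv : G = Set.univ := hne.eq_univ
    have hmem : ∀ s : ℝ, 0 ≤ s → s ∈ {s : ℝ | 0 ≤ s ∧ ∃ C : ℝ, 0 < C ∧ ∀ ε : ℝ,
        0 < ε → ε ≤ 1 →
        (volume (cthickening ε G)).toReal - (volume G).toReal ≤ C * ε ^ s} := by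
      intro s hs
      refine ⟨hs, 1, one_pos, fun ε hε hε1 => ?_⟩
      have hct : cthickening ε G = G := by
        rw [hGuniv]
        exact Set.eq_univ_of_univ_subset (self_subset_cthickening _)
      rw [hct, sub_self, one_mul]
      positivity
    have hnb : ¬ BddAbove {s : ℝ | 0 ≤ s ∧ ∃ C : ℝ, 0 < C ∧ ∀ ε : ℝ, 0 < ε → ε ≤ 1 →
        (volume (cthickening ε G)).toReal - (volume G).toReal ≤ C * ε ^ s} := by
      rw [not_bddAbove_iff]
      intro x
      exact ⟨max x 0 + 1, hmem _ (by positivity), by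
        have := le_max_left x 0; linarith⟩
    rw [Real.sSup_of_not_bddAbove hnb]
    norm_num
  · apply Real.sSup_le _ zero_le_one
    rintro s ⟨hs0, C, hC, hbound⟩
    by_contra hs1
    push_neg at hs1
    haveI : Nonempty (Fin n) := ⟨⟨0, hn⟩⟩
    obtain ⟨v, hv⟩ : ∃ v : EuclideanSpace ℝ (Fin n), ‖v‖ = 1 :=
      exists_norm_eq _ zero_le_one
    obtain ⟨R₀, hR₀⟩ := hG.isBounded.subset_closedBall 0
    set R := max R₀ 0 with hRdef
    have hR : G ⊆ closedBall 0 R := hR₀.trans (closedBall_subset_closedBall (le_max_left _ _))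
    have hR0 : (0:ℝ) ≤ R := le_max_right _ _
    set m := (volume G).toReal with hm
    have hm0 : 0 < m := ENNReal.toReal_pos hpos.ne' hG.measure_lt_top.ne
    set c := m / (2 * R + 2) with hc
    have hc0 : 0 < c := by positivity
    -- linear lower bound vs. the assumed upper bound
    have hcomb : ∀ ε : ℝ, 0 < ε → ε ≤ 1 → c * ε ≤ C * ε ^ s := by
      intro ε hε hε1
      have h1 := key_lb G hG v hv R hR0 hR hε hε1
      have h2 := hbound ε hε hε1
      have : m * ε / (2 * R + 2) = c * ε := by rw [hc]; ring
      linarith [this ▸ h1]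
    -- deduce `c ≤ C * ε ^ (s-1)` and pick a small ε for a contradiction
    have hcs : ∀ ε : ℝ, 0 < ε → ε ≤ 1 → c ≤ C * ε ^ (s - 1) := by
      intro ε hε hε1
      have h1 := hcomb ε hε hε1
      have h2 : ε ^ s = ε ^ (s - 1) * ε := by
        rw [← Real.rpow_add_one hε.ne' (s - 1)]
        ring_nf
      rw [h2, ← mul_assoc] at h1
      exact le_of_mul_le_mul_right h1 hε
    set ε₀ : ℝ := min 1 ((c / (2 * C)) ^ (s - 1)⁻¹) with hε₀def
    have hbase : 0 < c / (2 * C) := by positivity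
    have hε₀ : 0 < ε₀ := lt_min one_pos (Real.rpow_pos_of_pos hbase _)
    have hε₀1 : ε₀ ≤ 1 := min_le_left _ _
    have hup : ε₀ ^ (s - 1) ≤ c / (2 * C) := by
      calc ε₀ ^ (s - 1) ≤ ((c / (2 * C)) ^ (s - 1)⁻¹) ^ (s - 1) :=
            Real.rpow_le_rpow hε₀.le (min_le_right _ _) (by linarith)
        _ = c / (2 * C) := Real.rpow_inv_rpow hbase.le (by linarith : s - 1 ≠ 0)
    have := hcs ε₀ hε₀ hε₀1
    have hfin : C * ε₀ ^ (s - 1) ≤ c / 2 := by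
      calc C * ε₀ ^ (s - 1) ≤ C * (c / (2 * C)) :=
            mul_le_mul_of_nonneg_left hup hC.le
        _ = c / 2 := by field_simp
    linarith

/-- For every compact set `G ⊆ ℝⁿ` of positive Lebesgue measure, `s(G) ≤ 1`. -/
theorem surfReg_le_one {n : ℕ} (G : Set (EuclideanSpace ℝ (Fin n)))
    (hG : IsCompact G) (hpos : 0 < volume G) : surfReg G ≤ 1 :=
  surfReg_le_one' G hG hpos
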